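/- arXiv:1305.0172 — 5 statements merged into one kernel-verified Lean document; each statement's English description precedes it below -/
import Mathlib

section
/- Let p, s, s' be points in the plane such that s and s' both lie in a cone with apex p of angular width π/3, and |p s'| ≤ |p s|. Then |s s'| ≤ |p s|. -/
open InnerProductGeometry Real

private lemma inner_ge_of_angle_le' {E : Type*} [NormedAddCommGroup E]
    [InnerProductSpace ℝ E] {v u : E} (hu : ‖u‖ = 1)
    (h : angle v u ≤ Real.pi / 6) :
    Real.sqrt 3 / 2 * ‖v‖ ≤ (inner ℝ v u : ℝ) := by
  have h1 : Real.cos (Real.pi / 6) ≤ Real.cos (angle v u) :=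
    Real.cos_le_cos_of_nonneg_of_le_pi (angle_nonneg v u)
      (by linarith [Real.pi_pos]) h
  have h2 : Real.cos (angle v u) * (‖v‖ * ‖u‖) = (inner ℝ v u : ℝ) :=
    cos_angle_mul_norm_mul_norm v u
  rw [Real.cos_pi_div_six] at h1
  rw [hu, mul_one] at h2
  nlinarith [norm_nonneg v]

private lemma real_arith {A B X Y I D ca cb : ℝ}
    (hA0 : 0 ≤ A) (hB0 : 0 ≤ B) (hX0 : 0 ≤ X) (hY0 : 0 ≤ Y) (hD0 : 0 ≤ D)
    (hle : B ≤ A)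
    (hX : X ^ 2 ≤ A ^ 2 / 4) (hY : Y ^ 2 ≤ B ^ 2 / 4)
    (hsq3 : 3 / 4 * (A * B) ≤ ca * cb)
    (hCS1 : -(X * Y) ≤ I - ca * cb)
    (hsub : D ^ 2 = A ^ 2 - 2 * I + B ^ 2) : D ≤ A := by
  have hXY : X * Y ≤ A * B / 4 := by
    nlinarith [mul_nonneg hX0 hY0, mul_nonneg hA0 hB0,
      mul_le_mul hX hY (sq_nonneg Y) (by positivity : (0:ℝ) ≤ A ^ 2 / 4)]
  have hI : 1 / 2 * (A * B) ≤ I := by linarith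
  have hfin : D ^ 2 ≤ A ^ 2 := by nlinarith
  nlinarith

private lemma cone_key {E : Type*} [NormedAddCommGroup E] [InnerProductSpace ℝ E]
    (u a b : E) (hu : ‖u‖ = 1)
    (hA : angle a u ≤ Real.pi / 6) (hB : angle b u ≤ Real.pi / 6)
    (hle : ‖b‖ ≤ ‖a‖) : ‖a - b‖ ≤ ‖a‖ := by
  have h3 : Real.sqrt 3 ^ 2 = 3 := Real.sq_sqrt (by norm_num)
  have hs3 : (0:ℝ) ≤ Real.sqrt 3 := Real.sqrt_nonneg 3
  have hA' : Real.sqrt 3 / 2 * ‖a‖ ≤ (inner ℝ a u : ℝ) := inner_ge_of_angle_le' hu hA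
  have hB' : Real.sqrt 3 / 2 * ‖b‖ ≤ (inner ℝ b u : ℝ) := inner_ge_of_angle_le' hu hB
  obtain ⟨ca, hca⟩ : ∃ c : ℝ, (inner ℝ a u : ℝ) = c := ⟨_, rfl⟩
  obtain ⟨cb, hcb⟩ : ∃ c : ℝ, (inner ℝ b u : ℝ) = c := ⟨_, rfl⟩
  rw [hca] at hA'; rw [hcb] at hB'
  have hca0 : 0 ≤ ca := le_trans (by positivity) hA'
  have hcb0 : 0 ≤ cb := le_trans (by positivity) hB'
  have huu : (inner ℝ u u : ℝ) = 1 := by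
    rw [real_inner_self_eq_norm_sq, hu]; norm_num
  have hua : (inner ℝ u a : ℝ) = ca := by rw [real_inner_comm, hca]
  have hub : (inner ℝ u b : ℝ) = cb := by rw [real_inner_comm, hcb]
  have hna : ‖a - ca • u‖ ^ 2 = ‖a‖ ^ 2 - ca ^ 2 := by
    rw [← real_inner_self_eq_norm_sq, inner_sub_left, inner_sub_right, inner_sub_right,
      real_inner_smul_left, real_inner_smul_left, real_inner_smul_right,
      real_inner_smul_right, huu, hua, hca, real_inner_self_eq_norm_sq]
    ring
  have hnb : ‖b - cb • u‖ ^ 2 = ‖b‖ ^ 2 - cb ^ 2 := by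
    rw [← real_inner_self_eq_norm_sq, inner_sub_left, inner_sub_right, inner_sub_right,
      real_inner_smul_left, real_inner_smul_left, real_inner_smul_right,
      real_inner_smul_right, huu, hub, hcb, real_inner_self_eq_norm_sq]
    ring
  have hinner : (inner ℝ (a - ca • u) (b - cb • u) : ℝ) = (inner ℝ a b : ℝ) - ca * cb := by
    rw [inner_sub_left, inner_sub_right, inner_sub_right, real_inner_smul_left,
      real_inner_smul_left, real_inner_smul_right, real_inner_smul_right, huu, hub, hca]
    ring
  have hCS := abs_real_inner_le_norm (a - ca • u) (b - cb • u)
  rw [hinner] at hCS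
  have hCS1 := (abs_le.mp hCS).1
  have hsq3 : (3:ℝ) / 4 * (‖a‖ * ‖b‖) ≤ ca * cb := by
    have h := mul_le_mul hA' hB' (by positivity) hca0
    have heq : Real.sqrt 3 / 2 * ‖a‖ * (Real.sqrt 3 / 2 * ‖b‖)
        = Real.sqrt 3 ^ 2 / 4 * (‖a‖ * ‖b‖) := by ring
    rw [heq, h3] at h; linarith
  have hna2 : ‖a - ca • u‖ ^ 2 ≤ ‖a‖ ^ 2 / 4 := by
    have h := mul_le_mul hA' hA' (by positivity) hca0
    have heq : Real.sqrt 3 / 2 * ‖a‖ * (Real.sqrt 3 / 2 * ‖a‖)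
        = Real.sqrt 3 ^ 2 / 4 * ‖a‖ ^ 2 := by ring
    rw [heq, h3] at h
    rw [hna]; nlinarith
  have hnb2 : ‖b - cb • u‖ ^ 2 ≤ ‖b‖ ^ 2 / 4 := by
    have h := mul_le_mul hB' hB' (by positivity) hcb0
    have heq : Real.sqrt 3 / 2 * ‖b‖ * (Real.sqrt 3 / 2 * ‖b‖)
        = Real.sqrt 3 ^ 2 / 4 * ‖b‖ ^ 2 := by ring
    rw [heq, h3] at h
    rw [hnb]; nlinarith
  have hsub : ‖a - b‖ ^ 2 = ‖a‖ ^ 2 - 2 * (inner ℝ a b : ℝ) + ‖b‖ ^ 2 :=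
    norm_sub_sq_real a b
  exact real_arith (norm_nonneg a) (norm_nonneg b) (norm_nonneg _) (norm_nonneg _)
    (norm_nonneg _) hle hna2 hnb2 hsq3 hCS1 hsub

/-- If `s` and `s'` both lie in a cone with apex `p` of angular width π/3
(points whose direction from `p` makes angle at most π/6 with a fixed unit vector `u`),
and `dist p s' ≤ dist p s`, then `dist s s' ≤ dist p s`. -/
theorem bottleneck_cone_dist
    (p s s' u : EuclideanSpace ℝ (Fin 2)) (hu : ‖u‖ = 1)
    (hs : InnerProductGeometry.angle (s - p) u ≤ Real.pi / 6)
    (hs' : InnerProductGeometry.angle (s' - p) u ≤ Real.pi / 6)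
    (hle : dist p s' ≤ dist p s) :
    dist s s' ≤ dist p s := by
  have hps : dist p s = ‖s - p‖ := by rw [dist_comm, dist_eq_norm]
  have hps' : dist p s' = ‖s' - p‖ := by rw [dist_comm, dist_eq_norm]
  have hss' : dist s s' = ‖(s - p) - (s' - p)‖ := by
    rw [dist_eq_norm]; congr 1; abel
  rw [hps, hps'] at hle
  rw [hps, hss']
  exact cone_key u (s - p) (s' - p) hu hs hs' hle
end

section
/- Let T be a minimum spanning tree of a finite weighted connected graph, let λ > 0, and remove from T all edges of weight at least λ. Then two vertices u, v lie in the same resulting component if and only if there is a path from u to v in the original graph all of whose edges have weight less than λ. -/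
/-- Total weight of the edges of a graph. -/
noncomputable def weightSum {V : Type*} [Fintype V] (G : SimpleGraph V)
    (w : Sym2 V → ℝ) : ℝ :=
  ∑ e ∈ (Set.toFinite G.edgeSet).toFinset, w e

open SimpleGraph

/-- If `e` lies on a path from `a` to `b` in a tree, then deleting `e` disconnects `a` and `b`. -/
private lemma tree_path_delete_not_reachable {V : Type*} {T : SimpleGraph V} (hT : T.IsTree)
    {a b : V} {q : T.Walk a b} (hq : q.IsPath) {e : Sym2 V} (he : e ∈ q.edges) :
    ¬ (T.deleteEdges {e}).Reachable a b := by
  classical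
  rintro ⟨r⟩
  have hr : ∀ f ∈ r.edges, f ∈ T.edgeSet := by
    intro f hf
    have h := r.edges_subset_edgeSet hf
    rw [edgeSet_deleteEdges] at h
    exact h.1
  have huniq : (⟨q, hq⟩ : T.Path a b) = (r.transfer T hr).toPath :=
    hT.IsAcyclic.path_unique _ _
  have h1 : e ∈ ((r.transfer T hr).toPath : T.Walk a b).edges := by
    rw [← huniq]; exact he
  have h2 : e ∈ (r.transfer T hr).edges := Walk.edges_toPath_subset _ h1
  rw [Walk.edges_transfer] at h2
  have h3 := r.edges_subset_edgeSet h2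
  rw [edgeSet_deleteEdges] at h3
  exact h3.2 rfl

/-- In a tree, after deleting edge `s(x,y)`, every vertex can still reach `x` or `y`. -/
private lemma tree_delete_reach_endpoint {V : Type*} {T : SimpleGraph V} (hT : T.IsTree)
    {x y : V} (hxy : T.Adj x y) (z : V) :
    (T.deleteEdges {s(x, y)}).Reachable z x ∨ (T.deleteEdges {s(x, y)}).Reachable z y := by
  classical
  obtain ⟨r, hr, -⟩ := hT.existsUnique_path z x
  by_cases hc : s(x, y) ∈ r.edges
  · right
    have hy : y ∈ r.support := r.snd_mem_support_of_mem_edges hc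
    have hd : (⟨r.dropUntil y hy, hr.dropUntil hy⟩ : T.Path y x) = Path.singleton hxy.symm :=
      hT.IsAcyclic.path_unique _ _
    have hdedges : (r.dropUntil y hy).edges = [s(y, x)] := by
      have := congrArg (fun p : T.Path y x => (p : T.Walk y x).edges) hd
      simpa [Path.singleton] using this
    have hmemd : s(x, y) ∈ (r.dropUntil y hy).edges := by
      rw [hdedges, Sym2.eq_swap]; exact List.mem_singleton_self _
    have hsplit : r.edges = (r.takeUntil y hy).edges ++ (r.dropUntil y hy).edges := by
      conv_lhs => rw [← r.take_spec hy]
      rw [Walk.edges_append]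
    have hnd := hr.isTrail.edges_nodup
    rw [hsplit] at hnd
    have hnot : s(x, y) ∉ (r.takeUntil y hy).edges :=
      fun hmem => (List.disjoint_of_nodup_append hnd) hmem hmemd
    refine ⟨(r.takeUntil y hy).transfer _ ?_⟩
    intro f hf
    rw [edgeSet_deleteEdges]
    refine ⟨(r.takeUntil y hy).edges_subset_edgeSet hf, ?_⟩
    intro hfe
    rw [Set.mem_singleton_iff] at hfe
    exact hnot (hfe ▸ hf)
  · left
    refine ⟨r.transfer _ ?_⟩
    intro f hf
    rw [edgeSet_deleteEdges]
    refine ⟨r.edges_subset_edgeSet hf, ?_⟩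
    intro hfe
    rw [Set.mem_singleton_iff] at hfe
    exact hc (hfe ▸ hf)

/-- Let `T` be a minimum spanning tree of a finite weighted connected graph `G`,
let `λ > 0`, and remove from `T` all edges of weight at least `λ`. Then `u` and `v` lie in
the same component of the resulting forest iff there is a path from `u` to `v` in `G` all of
whose edges have weight less than `λ`. -/
theorem mst_component_iff_bounded_path
    {V : Type*} [Fintype V] (G : SimpleGraph V) (hG : G.Connected)
    (w : Sym2 V → ℝ)
    (T : SimpleGraph V) (hTG : T ≤ G) (hT : T.IsTree)
    (hmin : ∀ T' : SimpleGraph V, T' ≤ G → T'.IsTree → weightSum T w ≤ weightSum T' w)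
    (lam : ℝ) (hlam : 0 < lam) (u v : V) :
    (T.deleteEdges {e | lam ≤ w e}).Reachable u v ↔
      ∃ p : G.Walk u v, ∀ e ∈ p.edges, w e < lam := by
  classical
  have key : ∀ a b : V, G.Adj a b → w s(a, b) < lam →
      (T.deleteEdges {e | lam ≤ w e}).Reachable a b := by
    intro a b hGab hwab
    by_cases hTab : T.Adj a b
    · refine Adj.reachable ?_
      rw [deleteEdges_adj]
      exact ⟨hTab, by simpa [Set.mem_setOf_eq, not_le] using hwab⟩
    · obtain ⟨q, hq, -⟩ := hT.existsUnique_path a b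
      by_cases hall : ∀ f ∈ q.edges, w f < lam
      · refine ⟨q.transfer _ ?_⟩
        intro f hf
        rw [edgeSet_deleteEdges]
        exact ⟨q.edges_subset_edgeSet hf, fun hmem => absurd (hall f hf) (not_lt.2 hmem)⟩
      · push_neg at hall
        obtain ⟨e, hef, hwe⟩ := hall
        exfalso
        revert hef hwe
        refine Sym2.ind ?_ e
        intro x y hef hwe
        have hxy : T.Adj x y := q.adj_of_mem_edges hef
        have hne : a ≠ b := hGab.ne
        have hA : ¬ (T.deleteEdges {s(x, y)}).Reachable a b :=
          tree_path_delete_not_reachable hT hq hef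
        set D := T.deleteEdges {s(x, y)} with hD
        set T'' := D ⊔ fromEdgeSet {s(a, b)} with hT2
        have hDT : D ≤ T := deleteEdges_le _
        have hDT'' : D ≤ T'' := le_sup_left
        have habT'' : T''.Adj a b :=
          (sup_adj _ _ _ _).2 (Or.inr ((fromEdgeSet_adj _).2 ⟨Set.mem_singleton _, hne⟩))
        have hreachB := tree_delete_reach_endpoint hT hxy
        have hxyT'' : T''.Reachable x y := by
          rcases hreachB a with ha | ha <;> rcases hreachB b with hb | hb
          · exact absurd (ha.trans hb.symm) hA
          · exact (ha.symm.mono hDT'').trans (habT''.reachable.trans (hb.mono hDT''))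
          · exact ((ha.symm.mono hDT'').trans
              (habT''.reachable.trans (hb.mono hDT''))).symm
          · exact absurd (ha.trans hb.symm) hA
        have hconn : T''.Connected := by
          rw [connected_iff]
          refine ⟨fun z₁ z₂ => ?_, hG.nonempty⟩
          have hzx : ∀ z, T''.Reachable z x := by
            intro z
            rcases hreachB z with h | h
            · exact h.mono hDT''
            · exact (h.mono hDT'').trans hxyT''.symm
          exact (hzx z₁).trans (hzx z₂).symm
        have hacyc : T''.IsAcyclic := by
          intro z c hc
          by_cases hmem : s(a, b) ∈ c.edges
          · have hreach : (T'' \ fromEdgeSet {s(a, b)}).Reachable a b :=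
              (adj_and_reachable_delete_edges_iff_exists_cycle.2 ⟨z, c, hc, hmem⟩).2
            have hle' : T'' \ fromEdgeSet {s(a, b)} ≤ D := by
              intro p q hpq
              rw [sdiff_adj] at hpq
              obtain ⟨h1, h2⟩ := hpq
              rcases (sup_adj _ _ _ _).1 h1 with h | h
              · exact h
              · exact absurd h h2
            exact hA (hreach.mono hle')
          · have hsub : ∀ f ∈ c.edges, f ∈ T.edgeSet := by
              intro f hf
              have h := c.edges_subset_edgeSet hf
              rw [hT2, edgeSet_sup] at h
              rcases h with h | h
              · rw [hD, edgeSet_deleteEdges] at h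
                exact h.1
              · rw [edgeSet_fromEdgeSet] at h
                have h1 := h.1
                rw [Set.mem_singleton_iff] at h1
                exact absurd (h1 ▸ hf) hmem
            exact hT.IsAcyclic (c.transfer T hsub) (hc.transfer hsub)
        have hleG : T'' ≤ G := by
          refine sup_le (hDT.trans hTG) ?_
          intro p q hpq
          rw [fromEdgeSet_adj] at hpq
          obtain ⟨h1, h2⟩ := hpq
          rw [Set.mem_singleton_iff] at h1
          rw [← mem_edgeSet, h1, mem_edgeSet]
          exact hGab
        have hmemT : s(x, y) ∈ (Set.toFinite T.edgeSet).toFinset := by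
          rw [Set.Finite.mem_toFinset, mem_edgeSet]; exact hxy
        have hnotmem : s(a, b) ∉ ((Set.toFinite T.edgeSet).toFinset).erase s(x, y) := by
          rw [Finset.mem_erase, Set.Finite.mem_toFinset, mem_edgeSet]
          exact fun h => hTab h.2
        have hfin : (Set.toFinite T''.edgeSet).toFinset =
            insert s(a, b) (((Set.toFinite T.edgeSet).toFinset).erase s(x, y)) := by
          ext f
          rw [Set.Finite.mem_toFinset, Finset.mem_insert, Finset.mem_erase,
            Set.Finite.mem_toFinset, hT2, edgeSet_sup, hD, edgeSet_deleteEdges,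
            edgeSet_fromEdgeSet]
          constructor
          · rintro (⟨h1, h2⟩ | ⟨h1, h2⟩)
            · rw [Set.mem_singleton_iff] at h2
              exact Or.inr ⟨h2, h1⟩
            · rw [Set.mem_singleton_iff] at h1
              exact Or.inl h1
          · rintro (rfl | ⟨h1, h2⟩)
            · refine Or.inr ⟨Set.mem_singleton _, ?_⟩
              rw [Sym2.diagSet_eq_setOfPred_isDiag, Set.mem_setOf_eq, Sym2.mk_isDiag_iff]
              exact hne
            · exact Or.inl ⟨h2, by rwa [Set.mem_singleton_iff]⟩
        have hw2 : weightSum T'' w = w s(a, b) + (weightSum T w - w s(x, y)) := by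
          rw [weightSum, weightSum, hfin, Finset.sum_insert hnotmem,
            Finset.sum_erase_eq_sub hmemT]
        have hmin' := hmin T'' hleG ⟨hconn, hacyc⟩
        rw [hw2] at hmin'
        linarith
  constructor
  · rintro ⟨r⟩
    have hsub : ∀ f ∈ r.edges, f ∈ G.edgeSet := by
      intro f hf
      have h := r.edges_subset_edgeSet hf
      rw [edgeSet_deleteEdges] at h
      exact edgeSet_mono hTG h.1
    refine ⟨r.transfer G hsub, ?_⟩
    intro f hf
    rw [Walk.edges_transfer] at hf
    have h := r.edges_subset_edgeSet hf
    rw [edgeSet_deleteEdges] at h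
    exact not_le.1 h.2
  · rintro ⟨p, hp⟩
    clear hlam
    revert hp
    induction p with
    | nil => exact fun _ => Reachable.refl _
    | cons h q ih =>
      intro hp
      refine (key _ _ h (hp _ ?_)).trans (ih ?_)
      · rw [Walk.edges_cons]; exact List.mem_cons_self
      · intro f hf
        exact hp f (by rw [Walk.edges_cons]; exact List.mem_cons_of_mem _ hf)
end

section
/- Let T be a minimum spanning tree of a finite weighted connected graph and let T* be any subtree of the graph all of whose edges have weight less than λ. Then all vertices of T* lie in a single connected component of the forest obtained from T by deleting all edges of weight at least λ. -/
open SimpleGraph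

/-- Every vertex reaches one of the two endpoints of a deleted edge (or the walk's end). -/
private lemma reach_endpoint {V : Type*} {T : SimpleGraph V} (a b : V) :
    ∀ {x y : V}, T.Walk x y →
      (T.deleteEdges {s(a, b)}).Reachable x y ∨ (T.deleteEdges {s(a, b)}).Reachable x a ∨
        (T.deleteEdges {s(a, b)}).Reachable x b := by
  intro x y q
  induction q with
  | nil => exact Or.inl (Reachable.refl _)
  | @cons x x' y h q ih =>
    by_cases hxy : s(x, x') = s(a, b)
    · rw [Sym2.eq_iff] at hxy
      rcases hxy with ⟨rfl, rfl⟩ | ⟨rfl, rfl⟩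
      · exact Or.inr (Or.inl (Reachable.refl _))
      · exact Or.inr (Or.inr (Reachable.refl _))
    · have hadj : (T.deleteEdges {s(a, b)}).Adj x x' := by
        rw [deleteEdges_adj]
        exact ⟨h, by simpa using hxy⟩
      rcases ih with h1 | h1 | h1
      · exact Or.inl (hadj.reachable.trans h1)
      · exact Or.inr (Or.inl (hadj.reachable.trans h1))
      · exact Or.inr (Or.inr (hadj.reachable.trans h1))

/-- Key exchange lemma: the endpoints of any light edge of `G` are connected in the
forest obtained from the minimum spanning tree `T` by deleting heavy edges. -/
private lemma exchange_reach {V : Type*} [Fintype V] {G : SimpleGraph V}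
    {w : Sym2 V → ℝ} {T : SimpleGraph V} (hTG : T ≤ G) (hT : T.IsTree)
    (hmin : ∀ T' : SimpleGraph V, T' ≤ G → T'.IsTree → weightSum T w ≤ weightSum T' w)
    {lam : ℝ} {u v : V} (huv : G.Adj u v) (hwuv : w s(u, v) < lam) :
    (T.deleteEdges {e | lam ≤ w e}).Reachable u v := by
  classical
  by_contra hcon
  -- `u` and `v` are not adjacent in `T` (else the edge survives deletion)
  have hTuv : ¬ T.Adj u v := by
    intro h
    exact hcon (Adj.reachable (by rw [deleteEdges_adj]; exact ⟨h, by simpa using hwuv.not_ge⟩))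
  have h_e_notT : s(u, v) ∉ T.edgeSet := fun h => hTuv (T.mem_edgeSet.mp h)
  -- the unique path from u to v in T
  obtain ⟨r⟩ := hT.isConnected.preconnected u v
  set p : T.Path u v := r.toPath with hp
  -- some edge on it is heavy
  have hex : ∃ f ∈ (p : T.Walk u v).edges, lam ≤ w f := by
    by_contra h'
    push_neg at h'
    exact hcon ⟨(p : T.Walk u v).toDeleteEdges _ (fun e he => by
      simpa using (h' e he).not_ge)⟩
  obtain ⟨f, hfp, hfS⟩ := hex
  induction f using Sym2.ind with
  | _ a b =>
  have hab : T.Adj a b := (p : T.Walk u v).adj_of_mem_edges hfp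
  -- u and v are disconnected once the heavy edge is removed
  have huv_not : ¬ (T.deleteEdges {s(a, b)}).Reachable u v := by
    rintro ⟨q⟩
    have hq : ∀ e ∈ q.edges, e ∈ T.edgeSet := by
      intro e he
      have := q.edges_subset_edgeSet he
      rw [edgeSet_deleteEdges] at this
      exact this.1
    have hqf : s(a, b) ∉ q.edges := by
      intro he
      have := q.edges_subset_edgeSet he
      rw [edgeSet_deleteEdges] at this
      exact this.2 rfl
    have hq' : s(a, b) ∉ (q.transfer T hq).edges := by
      rwa [q.edges_transfer hq]
    have heq : p = (q.transfer T hq).toPath := hT.IsAcyclic.path_unique _ _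
    rw [heq] at hfp
    exact hq' (Walk.edges_toPath_subset _ hfp)
  -- the exchanged graph
  set D : SimpleGraph V := T.deleteEdges {s(a, b)} with hD
  set T'' : SimpleGraph V := D ⊔ fromEdgeSet {s(u, v)} with hT''
  have h_e_adj : T''.Adj u v := by
    rw [hT'', sup_adj, fromEdgeSet_adj]
    exact Or.inr ⟨rfl, huv.ne⟩
  have hDle : D ≤ T'' := le_sup_left
  have hT''G : T'' ≤ G := by
    refine sup_le ((deleteEdges_le _).trans hTG) ?_
    intro x y hxy
    rw [fromEdgeSet_adj] at hxy
    rcases Sym2.eq_iff.mp hxy.1 with ⟨rfl, rfl⟩ | ⟨rfl, rfl⟩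
    · exact huv
    · exact huv.symm
  -- connectivity
  have hside : ∀ x : V, D.Reachable x a ∨ D.Reachable x b := by
    intro x
    rcases reach_endpoint a b (hT.isConnected.preconnected x a).some with h | h | h
    · exact Or.inl h
    · exact Or.inl h
    · exact Or.inr h
  have hab'' : T''.Reachable a b := by
    rcases hside u with h1 | h1 <;> rcases hside v with h2 | h2
    · exact absurd (h1.trans h2.symm) huv_not
    · exact (h1.mono hDle).symm.trans (h_e_adj.reachable.trans (h2.mono hDle))
    · exact (h2.mono hDle).symm.trans (h_e_adj.reachable.symm.trans (h1.mono hDle))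
    · exact absurd (h1.trans h2.symm) huv_not
  have hreach_a : ∀ x : V, T''.Reachable x a := by
    intro x
    rcases hside x with h | h
    · exact h.mono hDle
    · exact (h.mono hDle).trans hab''.symm
  have hT''conn : T''.Connected := by
    rw [connected_iff]
    exact ⟨fun x y => (hreach_a x).trans (hreach_a y).symm, hT.isConnected.nonempty⟩
  -- edges of T'' other than the new edge are old light-side edges
  have hT''edges : ∀ e' ∈ T''.edgeSet, e' ≠ s(u, v) → e' ∈ T.edgeSet ∧ e' ≠ s(a, b) := by
    intro e' he' hne
    rw [hT'', edgeSet_sup, hD, edgeSet_deleteEdges, edgeSet_fromEdgeSet] at he'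
    rcases he' with h | h
    · exact ⟨h.1, by simpa using h.2⟩
    · exact absurd h.1 hne
  -- acyclicity
  have hT''ac : T''.IsAcyclic := by
    intro x c hc
    by_cases he : s(u, v) ∈ c.edges
    · have hreach : T''.Adj u v ∧ (T'' \ fromEdgeSet {s(u, v)}).Reachable u v :=
        adj_and_reachable_delete_edges_iff_exists_cycle.2 ⟨x, c, hc, he⟩
      apply huv_not
      refine hreach.2.mono ?_
      intro y z hyz
      rcases hyz with ⟨hyz1, hyz2⟩
      rcases hyz1 with h | h
      · exact h
      · exact absurd h hyz2
    · have hce : ∀ e' ∈ c.edges, e' ∈ T.edgeSet := fun e' he' =>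
        (hT''edges e' (c.edges_subset_edgeSet he') (fun h => he (h ▸ he'))).1
      exact hT.IsAcyclic (c.transfer T hce) (hc.transfer hce)
  -- weights
  have hfT : s(a, b) ∈ T.edgeSet := T.mem_edgeSet.mpr hab
  have hEdge : (Set.toFinite T''.edgeSet).toFinset =
      ((Set.toFinite T.edgeSet).toFinset \ {s(a, b)}) ∪ {s(u, v)} := by
    ext e'
    simp only [Set.Finite.mem_toFinset, hT'', edgeSet_sup, hD, edgeSet_deleteEdges,
      edgeSet_fromEdgeSet, Set.mem_union, Set.mem_diff, Set.mem_singleton_iff,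
      Finset.mem_union, Finset.mem_sdiff, Finset.mem_singleton, Set.mem_setOf_eq]
    have hdiag : ¬ (s(u, v) : Sym2 V).IsDiag := by simp [huv.ne]
    constructor
    · rintro (⟨h1, h2⟩ | ⟨h1, _⟩)
      · exact Or.inl ⟨h1, h2⟩
      · exact Or.inr h1
    · rintro (⟨h1, h2⟩ | rfl)
      · exact Or.inl ⟨h1, h2⟩
      · exact Or.inr ⟨rfl, hdiag⟩
  have h_e_notMem : s(u, v) ∉ (Set.toFinite T.edgeSet).toFinset \ {s(a, b)} := by
    simp only [Finset.mem_sdiff, Set.Finite.mem_toFinset]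
    exact fun h => h_e_notT h.1
  have hweight : weightSum T'' w = weightSum T w - w s(a, b) + w s(u, v) := by
    rw [weightSum, hEdge, Finset.sum_union (Finset.disjoint_singleton_right.2 h_e_notMem),
      Finset.sum_sdiff_eq_sub (by
        rw [Finset.singleton_subset_iff, Set.Finite.mem_toFinset]
        exact hfT)]
    simp [weightSum]
  have hlt : weightSum T'' w < weightSum T w := by
    rw [hweight]
    have : w s(u, v) < w s(a, b) := hwuv.trans_le hfS
    linarith
  exact absurd (hmin T'' hT''G ⟨hT''conn, hT''ac⟩) (not_le.mpr hlt)

/-- Let `T` be a minimum spanning tree of a finite weighted connected graph `G`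
and let `H` be any subtree of `G` (a connected acyclic subgraph) all of whose edges have
weight less than `λ`. Then all vertices of `H` lie in a single connected component of the
forest obtained from `T` by deleting all edges of weight at least `λ`. -/
theorem subtree_in_single_component
    {V : Type*} [Fintype V] (G : SimpleGraph V) (hG : G.Connected)
    (w : Sym2 V → ℝ)
    (T : SimpleGraph V) (hTG : T ≤ G) (hT : T.IsTree)
    (hmin : ∀ T' : SimpleGraph V, T' ≤ G → T'.IsTree → weightSum T w ≤ weightSum T' w)
    (lam : ℝ)
    (H : G.Subgraph) (hHconn : H.Connected) (hHacyclic : H.coe.IsAcyclic)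
    (hHw : ∀ e ∈ H.edgeSet, w e < lam) :
    ∀ u ∈ H.verts, ∀ v ∈ H.verts,
      (T.deleteEdges {e | lam ≤ w e}).Reachable u v := by
  intro u hu v hv
  have key : ∀ x y : V, H.Adj x y → (T.deleteEdges {e | lam ≤ w e}).Reachable x y := by
    intro x y hxy
    exact exchange_reach hTG hT hmin (H.adj_sub hxy) (hHw _ (Subgraph.mem_edgeSet.2 hxy))
  have walkkey : ∀ (x y : H.verts) (p : H.coe.Walk x y),
      (T.deleteEdges {e | lam ≤ w e}).Reachable x y := by
    intro x y p
    induction p with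
    | nil => exact Reachable.refl _
    | cons h _ ih => exact (key _ _ h).trans ih
  obtain ⟨p⟩ := hHconn.coe.preconnected ⟨u, hu⟩ ⟨v, hv⟩
  exact walkkey _ _ p
end

section
/- Let s₁, ..., s_m be real numbers (m ≥ 2, not all equal) with minimum a and maximum b, and let g = (b - a)/(m+1). Place S = {(s_i, 0) : 1 ≤ i ≤ m} and let P be a set of points in the plane such that every point of P is within distance g/2 of (a,0) or within distance g/2 of (b,0), with at least one point near each. Then any spanning tree on P ∪ S in which every point of P is a leaf adjacent to a point of S has some edge of length at least G, where G is the maximum gap of s₁,...,s_m; moreover there exists such a tree whose longest edge has length exactly G. -/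
/-- The point of the Euclidean plane with coordinates `(x, y)`. -/
noncomputable def pt (x y : ℝ) : EuclideanSpace ℝ (Fin 2) :=
  (WithLp.equiv 2 (Fin 2 → ℝ)).symm ![x, y]

noncomputable local instance : DecidableEq (EuclideanSpace ℝ (Fin 2)) :=
  Classical.decEq _

namespace MaxGapAux

open SimpleGraph

lemma pt_inj {x y : ℝ} (h : pt x 0 = pt y 0) : x = y := by
  have h2 := (WithLp.equiv 2 (Fin 2 → ℝ)).symm.injective h
  simpa using congrFun h2 0

lemma dist_pt (x y : ℝ) : dist (pt x 0) (pt y 0) = |x - y| := by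
  rw [EuclideanSpace.dist_eq]
  simp [pt, Fin.sum_univ_two, Real.dist_eq]
  exact Real.sqrt_sq_eq_abs _

variable {V : Type*}

lemma exists_crossing_adj {H : SimpleGraph V} (p : V → Prop) {x y : V}
    (w : H.Walk x y) : ¬ p y → p x →
    ∃ u v, H.Adj u v ∧ p u ∧ ¬ p v := by
  induction w with
  | nil => exact fun hy hx => absurd hx hy
  | @cons a b c h q ih =>
    intro hy hx
    by_cases hb : p b
    · exact ih hy hb
    · exact ⟨a, b, h, hx, hb⟩

/-- The graph generated by a parent function: `u ~ v` iff one is the parent of the other. -/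
def pgraph (f : V → V) : SimpleGraph V where
  Adj u v := u ≠ v ∧ (f u = v ∨ f v = u)
  symm := ⟨fun _ _ ⟨h1, h2⟩ => ⟨h1.symm, h2.symm⟩⟩
  loopless := ⟨fun _ h => h.1 rfl⟩

lemma pgraph_adj {f : V → V} {u v : V} :
    (pgraph f).Adj u v ↔ u ≠ v ∧ (f u = v ∨ f v = u) := Iff.rfl

lemma pgraph_isTree (f : V → V) (r : V) (hr : f r = r) (ρ : V → ℕ)
    (hρ : ∀ v, v ≠ r → ρ (f v) < ρ v) : (pgraph f).IsTree := by
  have hρ' : ∀ v, ρ (f v) ≤ ρ v := by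
    intro v
    by_cases h : v = r
    · subst h; rw [hr]
    · exact (hρ v h).le
  have hiter : ∀ (n : ℕ) (v : V), ρ (f^[n] v) ≤ ρ v := by
    intro n
    induction n with
    | zero => intro v; simp
    | succ n ih =>
      intro v
      rw [Function.iterate_succ_apply]
      exact (ih (f v)).trans (hρ' v)
  have hadj : ∀ v, v ≠ r → (pgraph f).Adj v (f v) := by
    intro v hv
    refine ⟨fun h => ?_, Or.inl rfl⟩
    · have := hρ v hv
      rw [← h] at this
      exact absurd this (lt_irrefl _)
  have hreach : ∀ (n : ℕ) (v : V), ρ v ≤ n → (pgraph f).Reachable v r := by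
    intro n
    induction n with
    | zero =>
      intro v hv
      by_cases h : v = r
      · subst h; exact Reachable.refl _
      · exact absurd (lt_of_lt_of_le (hρ v h) hv) (Nat.not_lt_zero _)
    | succ n ih =>
      intro v hv
      by_cases h : v = r
      · subst h; exact Reachable.refl _
      · exact ((hadj v h).reachable).trans (ih (f v) (by have := hρ v h; omega))
  have hconn : (pgraph f).Connected := by
    haveI : Nonempty V := ⟨r⟩
    exact Connected.mk fun u v =>
      (hreach (ρ u) u le_rfl).trans (hreach (ρ v) v le_rfl).symm
  refine ⟨hconn, ?_⟩
  rw [isAcyclic_iff_forall_adj_isBridge]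
  have key : ∀ v, v ≠ r → (pgraph f).IsBridge s(v, f v) := by
    intro v hv
    rw [isBridge_iff]
    rintro ⟨w⟩
    set D : V → Prop := fun x => ∃ n : ℕ, f^[n] x = v with hD
    have hDv : D v := ⟨0, rfl⟩
    have hDfv : ¬ D (f v) := by
      rintro ⟨n, hn⟩
      have h1 : ρ (f^[n] (f v)) ≤ ρ (f v) := hiter n (f v)
      rw [hn] at h1
      exact absurd (lt_of_le_of_lt h1 (hρ v hv)) (lt_irrefl _)
    obtain ⟨x, z, hxz, hx, hz⟩ := exists_crossing_adj D w hDfv hDv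
    obtain ⟨hadj', hne⟩ := (SimpleGraph.sdiff_adj _ _ _ _).mp hxz
    obtain ⟨hxne, hor⟩ := hadj'
    rcases hor with h | h
    · obtain ⟨n, hn⟩ := hx
      rcases n with - | n
      · simp only [Function.iterate_zero, id] at hn
        subst hn
        exact hne ((fromEdgeSet_adj _).mpr ⟨by simp [h], hxne⟩)
      · exact hz ⟨n, by rw [← h, ← Function.iterate_succ_apply, hn]⟩
    · obtain ⟨n, hn⟩ := hx
      exact hz ⟨n + 1, by rw [Function.iterate_succ_apply, h, hn]⟩
  intro u v huv
  rcases huv.2 with h | h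
  · have hu : u ≠ r := by
      rintro rfl
      exact huv.1 (hr.symm.trans h)
    have := key u hu
    rwa [h] at this
  · have hvr : v ≠ r := by
      rintro rfl
      exact huv.1 (by rw [← h, hr])
    have := key v hvr
    rw [h] at this
    rwa [Sym2.eq_swap] at this

end MaxGapAux

open MaxGapAux in
/-- Let `s 0 < … < s (m-1)` (`m ≥ 2`) with minimum `a`, maximum `b`,
`g = (b-a)/(m+1)`, and maximum gap `G`. Put `S = {(s i, 0)}` and let `P` be a set of points
each within `g/2` of `(a,0)` or of `(b,0)`, with at least one point near each. Then every
spanning tree on `P ∪ S` in which each point of `P` is a leaf adjacent to a point of `S`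
has an edge of length at least `G`, and some such tree has longest edge of length exactly `G`. -/
theorem maxGap_bottleneck_steiner
    (m : ℕ) (hm : 2 ≤ m) (s : Fin m → ℝ) (hs : StrictMono s)
    (a b g G : ℝ)
    (ha : a = s ⟨0, by omega⟩) (hb : b = s ⟨m - 1, by omega⟩)
    (hg : g = (b - a) / (m + 1))
    (hG : G = Finset.univ.sup'
      (by
        have h1 : 0 < m - 1 := by omega
        haveI : Nonempty (Fin (m - 1)) := Fin.pos_iff_nonempty.mp h1
        exact Finset.univ_nonempty)
      (fun i : Fin (m - 1) => s ⟨i.1 + 1, by omega⟩ - s ⟨i.1, by omega⟩))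
    (S P : Finset (EuclideanSpace ℝ (Fin 2)))
    (hS : S = Finset.univ.image (fun i : Fin m => pt (s i) 0))
    (hdisj : Disjoint P S)
    (hP : ∀ p ∈ P, dist p (pt a 0) ≤ g / 2 ∨ dist p (pt b 0) ≤ g / 2)
    (hPa : ∃ p ∈ P, dist p (pt a 0) ≤ g / 2)
    (hPb : ∃ p ∈ P, dist p (pt b 0) ≤ g / 2) :
    (∀ T : SimpleGraph ↥(P ∪ S), T.IsTree →
      (∀ v : ↥(P ∪ S), (v : EuclideanSpace ℝ (Fin 2)) ∈ P →
        (∃! u, T.Adj v u) ∧ ∀ u, T.Adj v u → (u : EuclideanSpace ℝ (Fin 2)) ∈ S) →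
      ∃ u v : ↥(P ∪ S), T.Adj u v ∧
        G ≤ dist (u : EuclideanSpace ℝ (Fin 2)) (v : EuclideanSpace ℝ (Fin 2))) ∧
    (∃ T : SimpleGraph ↥(P ∪ S), T.IsTree ∧
      (∀ v : ↥(P ∪ S), (v : EuclideanSpace ℝ (Fin 2)) ∈ P →
        (∃! u, T.Adj v u) ∧ ∀ u, T.Adj v u → (u : EuclideanSpace ℝ (Fin 2)) ∈ S) ∧
      (∀ u v : ↥(P ∪ S), T.Adj u v →
        dist (u : EuclideanSpace ℝ (Fin 2)) (v : EuclideanSpace ℝ (Fin 2)) ≤ G) ∧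
      (∃ u v : ↥(P ∪ S), T.Adj u v ∧
        dist (u : EuclideanSpace ℝ (Fin 2)) (v : EuclideanSpace ℝ (Fin 2)) = G)) := by
  classical
  -- basic membership facts
  have hmemS : ∀ i : Fin m, pt (s i) 0 ∈ S := by
    intro i; rw [hS]; exact Finset.mem_image_of_mem _ (Finset.mem_univ i)
  have hmem : ∀ i : Fin m, pt (s i) 0 ∈ P ∪ S := fun i => Finset.mem_union_right _ (hmemS i)
  let sv : Fin m → ↥(P ∪ S) := fun i => ⟨pt (s i) 0, hmem i⟩
  have hsv : ∀ i : Fin m, (sv i : EuclideanSpace ℝ (Fin 2)) = pt (s i) 0 := fun i => rfl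
  have hPS : ∀ x, x ∈ P → x ∉ S := fun x hx => Finset.disjoint_left.mp hdisj hx
  have hsvP : ∀ i : Fin m, (sv i : EuclideanSpace ℝ (Fin 2)) ∉ P := fun i h =>
    hPS _ h (hmemS i)
  have hSidx : ∀ v : ↥(P ∪ S), (v : EuclideanSpace ℝ (Fin 2)) ∉ P →
      ∃ i : Fin m, (v : EuclideanSpace ℝ (Fin 2)) = pt (s i) 0 := by
    intro v hv
    have h2 := v.2
    rw [Finset.mem_union] at h2
    rcases h2 with h2 | h2
    · exact absurd h2 hv
    · have h3 : (v : EuclideanSpace ℝ (Fin 2)) ∈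
          Finset.image (fun i : Fin m => pt (s i) 0) Finset.univ := by
        rw [← hS]; exact h2
      obtain ⟨i, -, hi⟩ := Finset.mem_image.mp h3
      exact ⟨i, hi.symm⟩
  -- gap facts
  haveI hne01 : Nonempty (Fin (m - 1)) := ⟨⟨0, by omega⟩⟩
  have hgap : ∀ (i : ℕ) (h : i + 1 < m), s ⟨i + 1, h⟩ - s ⟨i, by omega⟩ ≤ G := by
    intro i h
    rw [hG]
    exact Finset.le_sup'
      (fun j : Fin (m - 1) => s ⟨j.1 + 1, by omega⟩ - s ⟨j.1, by omega⟩)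
      (Finset.mem_univ (⟨i, by omega⟩ : Fin (m - 1)))
  have hGpos : 0 < G := by
    have h0 := hgap 0 (by omega)
    have h1 : s ⟨0, by omega⟩ < s ⟨0 + 1, by omega⟩ := hs (by simp [Fin.lt_def])
    linarith
  have hab : a < b := by
    rw [ha, hb]; exact hs (by simp [Fin.lt_def]; omega)
  have hg0 : 0 < g := by
    rw [hg]
    have : (0:ℝ) < (m:ℝ) + 1 := by positivity
    exact div_pos (by linarith) this
  have htel : ∀ (k : ℕ) (hk : k < m), s ⟨k, hk⟩ - s ⟨0, by omega⟩ ≤ k * G := by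
    intro k
    induction k with
    | zero => intro hk; simp
    | succ n ih =>
      intro hk
      have h1 : s ⟨n + 1, hk⟩ - s ⟨n, by omega⟩ ≤ G := hgap n hk
      have h2 := ih (by omega)
      push_cast
      push_cast at h2
      linarith
  have hgG : g ≤ G := by
    have h1 := htel (m - 1) (by omega)
    rw [← hb, ← ha] at h1
    rw [hg, div_le_iff₀ (by positivity : (0:ℝ) < (m:ℝ) + 1)]
    have hmle : ((m - 1 : ℕ) : ℝ) ≤ (m : ℝ) + 1 := by
      have : (m - 1 : ℕ) ≤ m + 1 := by omega
      exact_mod_cast this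
    nlinarith [hGpos.le]
  have hg2G : g / 2 ≤ G := by linarith
  -- the maximal gap index
  obtain ⟨k, -, hk⟩ := Finset.exists_mem_eq_sup'
    (show (Finset.univ : Finset (Fin (m - 1))).Nonempty from Finset.univ_nonempty)
    (fun i : Fin (m - 1) => s ⟨i.1 + 1, by omega⟩ - s ⟨i.1, by omega⟩)
  have hk1m : k.1 + 1 < m := by have := k.2; omega
  have hkm : k.1 < m := by omega
  have hkG : G = s ⟨k.1 + 1, hk1m⟩ - s ⟨k.1, hkm⟩ := by rw [hG]; exact hk
  constructor
  · -- PART 1 : lower bound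
    intro T hT hleaf
    set idxle : ↥(P ∪ S) → Prop := fun v =>
      ∃ i : Fin m, i.1 ≤ k.1 ∧ (v : EuclideanSpace ℝ (Fin 2)) = pt (s i) 0 with hidxle
    set side : ↥(P ∪ S) → Prop := fun v =>
      idxle v ∨ ((v : EuclideanSpace ℝ (Fin 2)) ∈ P ∧ ∃ u, T.Adj v u ∧ idxle u) with hside
    have h1 : side (sv ⟨k.1, hkm⟩) := Or.inl ⟨⟨k.1, hkm⟩, le_rfl, rfl⟩
    have h2 : ¬ side (sv ⟨k.1 + 1, hk1m⟩) := by
      rintro (⟨i, hik, hei⟩ | ⟨hp, -⟩)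
      · have hii : i = ⟨k.1 + 1, hk1m⟩ := (hs.injective (pt_inj hei)).symm
        rw [hii] at hik
        have hik' : k.1 + 1 ≤ k.1 := hik
        omega
      · exact hsvP _ hp
    obtain ⟨wlk⟩ := hT.isConnected (sv ⟨k.1, hkm⟩) (sv ⟨k.1 + 1, hk1m⟩)
    obtain ⟨u, v, huv, hu, hv⟩ := exists_crossing_adj side wlk h2 h1
    have hiu : idxle u := by
      rcases hu with h | ⟨hp, x, hux, hxidx⟩
      · exact h
      · obtain ⟨⟨u0, -, huniq⟩, -⟩ := hleaf u hp
        have hvx : v = x := (huniq v huv).trans (huniq x hux).symm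
        exact absurd (Or.inl (by rw [hvx]; exact hxidx)) hv
    have hvP : (v : EuclideanSpace ℝ (Fin 2)) ∉ P := by
      intro hp
      exact hv (Or.inr ⟨hp, u, huv.symm, hiu⟩)
    obtain ⟨j, hvj⟩ := hSidx v hvP
    obtain ⟨i, hik, hui⟩ := hiu
    have hjk : k.1 + 1 ≤ j.1 := by
      by_contra hcon
      exact hv (Or.inl ⟨j, by omega, hvj⟩)
    refine ⟨u, v, huv, ?_⟩
    rw [hui, hvj, dist_pt]
    have hle1 : s i ≤ s ⟨k.1, hkm⟩ := hs.monotone (by rw [Fin.le_def]; exact hik)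
    have hle2 : s ⟨k.1 + 1, hk1m⟩ ≤ s j := hs.monotone (by rw [Fin.le_def]; exact hjk)
    have habs : |s i - s j| = s j - s i := by
      rw [abs_sub_comm]; exact abs_of_nonneg (by linarith)
    rw [habs, hkG]
    linarith
  · -- PART 2 : construction
    let i0 : Fin m := ⟨0, by omega⟩
    let iM : Fin m := ⟨m - 1, by omega⟩
    let J : ↥(P ∪ S) → Fin m := fun v =>
      if h : ∃ i : Fin m, (v : EuclideanSpace ℝ (Fin 2)) = pt (s i) 0 then h.choose else i0
    have hJ : ∀ (v : ↥(P ∪ S)), (v : EuclideanSpace ℝ (Fin 2)) ∉ P →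
        (v : EuclideanSpace ℝ (Fin 2)) = pt (s (J v)) 0 := by
      intro v hv
      have hex := hSidx v hv
      simp only [J, dif_pos hex]
      exact hex.choose_spec
    have hJsv : ∀ i : Fin m, J (sv i) = i := by
      intro i
      have h1 := hJ (sv i) (hsvP i)
      rw [hsv] at h1
      exact (hs.injective (pt_inj h1)).symm
    let f : ↥(P ∪ S) → ↥(P ∪ S) := fun v =>
      if (v : EuclideanSpace ℝ (Fin 2)) ∈ P then
        (if dist (v : EuclideanSpace ℝ (Fin 2)) (pt a 0) ≤ g / 2 then sv i0 else sv iM)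
      else sv ⟨(J v).1 - 1, lt_of_le_of_lt (Nat.sub_le _ _) (J v).2⟩
    let ρ : ↥(P ∪ S) → ℕ := fun v =>
      if (v : EuclideanSpace ℝ (Fin 2)) ∈ P then m else (J v).1
    have hfS : ∀ v, ∃ j : Fin m, f v = sv j := by
      intro v
      by_cases h : (v : EuclideanSpace ℝ (Fin 2)) ∈ P
      · by_cases h2 : dist (v : EuclideanSpace ℝ (Fin 2)) (pt a 0) ≤ g / 2
        · exact ⟨i0, by simp only [f, if_pos h, if_pos h2]⟩
        · exact ⟨iM, by simp only [f, if_pos h, if_neg h2]⟩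
      · exact ⟨⟨(J v).1 - 1, lt_of_le_of_lt (Nat.sub_le _ _) (J v).2⟩,
          by simp only [f, if_neg h]⟩
    have hfP : ∀ v, ((f v) : EuclideanSpace ℝ (Fin 2)) ∉ P := by
      intro v; obtain ⟨j, hj⟩ := hfS v; rw [hj]; exact hsvP j
    have hρsv : ∀ j : Fin m, ρ (sv j) = j.1 := by
      intro j
      simp only [ρ, if_neg (hsvP j), hJsv]
    have hsv_inj : ∀ i j : Fin m, sv i = sv j → i = j := by
      intro i j hij
      exact hs.injective (pt_inj (congrArg Subtype.val hij))
    have hfr : f (sv i0) = sv i0 := by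
      simp only [f, if_neg (hsvP i0), hJsv]
      exact congrArg sv (Fin.ext rfl)
    have hρ : ∀ v : ↥(P ∪ S), v ≠ sv i0 → ρ (f v) < ρ v := by
      intro v hvne
      by_cases h : (v : EuclideanSpace ℝ (Fin 2)) ∈ P
      · have hρv : ρ v = m := if_pos h
        obtain ⟨j, hj⟩ := hfS v
        have h2 : ρ (f v) = j.1 := by rw [hj]; exact hρsv j
        rw [h2, hρv]
        exact j.2
      · have hρv : ρ v = (J v).1 := if_neg h
        have hJne : (J v).1 ≠ 0 := by
          intro h0
          apply hvne
          apply Subtype.ext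
          rw [hJ v h, hsv, show J v = i0 from Fin.ext h0]
        have h2 : ρ (f v) = (J v).1 - 1 := by
          simp only [f, if_neg h]
          exact hρsv _
        rw [h2, hρv]
        omega
    -- the tree
    refine ⟨pgraph f, pgraph_isTree f (sv i0) hfr ρ hρ, ?_, ?_, ?_⟩
    · -- leaf conditions
      intro v hvP
      have hvne : v ≠ f v := by
        intro h
        exact hfP v (h ▸ hvP)
      have hadjf : (pgraph f).Adj v (f v) := ⟨hvne, Or.inl rfl⟩
      have huniq : ∀ u, (pgraph f).Adj v u → u = f v := by
        rintro u ⟨hne, h | h⟩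
        · exact h.symm
        · exact absurd (h ▸ hvP) (hfP u)
      constructor
      · exact ⟨f v, hadjf, huniq⟩
      · intro u hu
        rw [huniq u hu]
        obtain ⟨j, hj⟩ := hfS v
        rw [hj]
        exact hmemS j
    · -- all edges short
      have main : ∀ u v : ↥(P ∪ S), f u = v → u ≠ v →
          dist (u : EuclideanSpace ℝ (Fin 2)) (v : EuclideanSpace ℝ (Fin 2)) ≤ G := by
        intro u v hfu hne
        by_cases h : (u : EuclideanSpace ℝ (Fin 2)) ∈ P
        · by_cases h2 : dist (u : EuclideanSpace ℝ (Fin 2)) (pt a 0) ≤ g / 2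
          · have : v = sv i0 := by rw [← hfu]; simp only [f, if_pos h, if_pos h2]
            rw [this, hsv]
            have : pt (s i0) 0 = pt a 0 := by rw [ha]
            rw [this]
            linarith
          · have hub : dist (u : EuclideanSpace ℝ (Fin 2)) (pt b 0) ≤ g / 2 :=
              (hP _ h).resolve_left h2
            have : v = sv iM := by rw [← hfu]; simp only [f, if_pos h, if_neg h2]
            rw [this, hsv]
            have : pt (s iM) 0 = pt b 0 := by rw [hb]
            rw [this]
            linarith
        · have hv2 : v = sv ⟨(J u).1 - 1, lt_of_le_of_lt (Nat.sub_le _ _) (J u).2⟩ := by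
            rw [← hfu]; simp only [f, if_neg h]
          have hJne : (J u).1 ≠ 0 := by
            intro h0
            apply hne
            rw [hv2]
            apply Subtype.ext
            rw [hJ u h, hsv]
            exact congrArg (fun z => pt (s z) 0)
              (Fin.ext (show (J u).1 = (J u).1 - 1 by omega))
          rw [hv2, hJ u h, hsv, dist_pt]
          have hlt : s ⟨(J u).1 - 1, lt_of_le_of_lt (Nat.sub_le _ _) (J u).2⟩ ≤ s (J u) :=
            hs.monotone (by rw [Fin.le_def]; exact Nat.sub_le _ _)
          rw [abs_of_nonneg (by linarith)]
          have hg1 : (J u).1 - 1 + 1 < m := by have := (J u).2; omega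
          have := hgap ((J u).1 - 1) hg1
          have he : (⟨(J u).1 - 1 + 1, hg1⟩ : Fin m) = J u := by
            apply Fin.ext
            show (J u).1 - 1 + 1 = (J u).1
            omega
          rw [he] at this
          linarith
      rintro u v ⟨hne, h | h⟩
      · exact main u v h hne
      · rw [dist_comm]
        exact main v u h (Ne.symm hne)
    · -- the long edge
      refine ⟨sv ⟨k.1 + 1, hk1m⟩, sv ⟨k.1, hkm⟩, ⟨?_, Or.inl ?_⟩, ?_⟩
      · intro h
        have h2 := hsv_inj _ _ h
        have h3 : k.1 + 1 = k.1 := congrArg Fin.val h2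
        omega
      · simp only [f, if_neg (hsvP _), hJsv]
        exact congrArg sv (Fin.ext rfl)
      · rw [hsv, hsv, dist_pt, hkG]
        rw [abs_of_nonneg]
        have : s ⟨k.1, hkm⟩ ≤ s ⟨k.1 + 1, hk1m⟩ :=
          hs.monotone (by rw [Fin.le_def]; exact Nat.le_succ _)
        linarith
end

section
/- For each point p ∈ P, if for every nonempty cone C (among six cones of angle π/3 with apex p covering the plane) containing a point of S the graph Υ₆(P,S) includes an edge from p to some nearest point of S in C ∩ S, then: for every s ∈ S there exists s' ∈ S with (p,s') an edge of Υ₆(P,S) and |s s'| ≤ |p s|. -/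
/-- The unit direction of the `k`-th of six cones. -/
noncomputable def dir (k : Fin 6) : EuclideanSpace ℝ (Fin 2) :=
  pt (Real.cos (k * Real.pi / 3)) (Real.sin (k * Real.pi / 3))

/-- Membership of `q` in the `k`-th cone of angular width `π/3` with apex `p`. -/
def inCone (p : EuclideanSpace ℝ (Fin 2)) (k : Fin 6)
    (q : EuclideanSpace ℝ (Fin 2)) : Prop :=
  InnerProductGeometry.angle (q - p) (dir k) ≤ Real.pi / 6

open Real

lemma sqrt_sq_zero {x y : ℝ} (h : Real.sqrt (x^2+y^2) = 0) : x = 0 ∧ y = 0 := by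
  have : x^2 + y^2 = 0 := by
    have := Real.sqrt_eq_zero (by positivity : (0:ℝ) ≤ x^2+y^2) |>.mp h
    linarith
  constructor <;> nlinarith [sq_nonneg x, sq_nonneg y]

lemma alg_key2 (a b a' b' nu nw : ℝ) (hnupos : 0 < nu) (hnwpos : 0 < nw)
    (key : a^2 + b^2 = nu^2) (key' : a'^2 + b'^2 = nw^2)
    (hu : Real.sqrt 3 / 2 * nu ≤ a) (hw : Real.sqrt 3 / 2 * nw ≤ a') :
    1/2 * (nu*nw) ≤ a*a' + b*b' := by
  have h3 : (Real.sqrt 3)^2 = 3 := Real.sq_sqrt (by norm_num)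
  have h30 : (0:ℝ) ≤ Real.sqrt 3 := Real.sqrt_nonneg 3
  have ha2 : 3/4 * nu^2 ≤ a^2 := by nlinarith [mul_le_mul hu hu (by positivity) (le_trans (by positivity) hu)]
  have ha'2 : 3/4 * nw^2 ≤ a'^2 := by nlinarith [mul_le_mul hw hw (by positivity) (le_trans (by positivity) hw)]
  have hb2 : b^2 ≤ nu^2/4 := by linarith
  have hb'2 : b'^2 ≤ nw^2/4 := by linarith
  have haa' : 3/4 * (nu*nw) ≤ a*a' := by
    have heq : Real.sqrt 3/2*nu * (Real.sqrt 3/2*nw) = 3/4*(nu*nw) := by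
      linear_combination (nu*nw/4)*h3
    calc 3/4*(nu*nw) = Real.sqrt 3/2*nu * (Real.sqrt 3/2*nw) := heq.symm
      _ ≤ a*a' := mul_le_mul hu hw (by positivity) (le_trans (by positivity) hu)
  have hbb : -(nu^2*nw^2)/4 ≤ b*b'*(nu*nw) := by
    nlinarith [sq_nonneg (b*nw + b'*nu),
      mul_le_mul_of_nonneg_right hb2 (sq_nonneg nw),
      mul_le_mul_of_nonneg_right hb'2 (sq_nonneg nu)]
  have hbb' : -(nu*nw)/4 ≤ b*b' := by
    have hpos : 0 < nu*nw := mul_pos hnupos hnwpos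
    nlinarith
  linarith

lemma alg_key (u0 u1 w0 w1 c s : ℝ) (hcs : c^2 + s^2 = 1)
    (hu : Real.sqrt 3 / 2 * Real.sqrt (u0^2+u1^2) ≤ u0*c + u1*s)
    (hw : Real.sqrt 3 / 2 * Real.sqrt (w0^2+w1^2) ≤ w0*c + w1*s) :
    1/2 * (Real.sqrt (u0^2+u1^2) * Real.sqrt (w0^2+w1^2)) ≤ u0*w0 + u1*w1 := by
  have hnu2 : (Real.sqrt (u0^2+u1^2))^2 = u0^2+u1^2 := Real.sq_sqrt (by positivity)
  have hnw2 : (Real.sqrt (w0^2+w1^2))^2 = w0^2+w1^2 := Real.sq_sqrt (by positivity)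
  have hnu0 : 0 ≤ Real.sqrt (u0^2+u1^2) := Real.sqrt_nonneg _
  have hnw0 : 0 ≤ Real.sqrt (w0^2+w1^2) := Real.sqrt_nonneg _
  rcases eq_or_lt_of_le hnu0 with h0 | hnupos
  · obtain ⟨h1, h2⟩ := sqrt_sq_zero h0.symm
    simp [h1, h2, ← h0]
  rcases eq_or_lt_of_le hnw0 with h0 | hnwpos
  · obtain ⟨h1, h2⟩ := sqrt_sq_zero h0.symm
    simp [h1, h2, ← h0]
  have key : (u0*c+u1*s)^2 + (u1*c-u0*s)^2 = (Real.sqrt (u0^2+u1^2))^2 := by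
    rw [hnu2]; linear_combination (u0^2+u1^2)*hcs
  have key' : (w0*c+w1*s)^2 + (w1*c-w0*s)^2 = (Real.sqrt (w0^2+w1^2))^2 := by
    rw [hnw2]; linear_combination (w0^2+w1^2)*hcs
  have hid : u0*w0 + u1*w1 = (u0*c+u1*s)*(w0*c+w1*s) + (u1*c-u0*s)*(w1*c-w0*s) := by
    linear_combination (-(u0*w0)-u1*w1)*hcs
  rw [hid]
  exact alg_key2 _ _ _ _ _ _ hnupos hnwpos key key' hu hw

lemma inner_coords (v w : EuclideanSpace ℝ (Fin 2)) :
    (inner ℝ v w : ℝ) = v 0 * w 0 + v 1 * w 1 := by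
  rw [PiLp.inner_apply, Fin.sum_univ_two]
  simp [RCLike.inner_apply, mul_comm]

lemma pt_apply0 (x y : ℝ) : pt x y 0 = x := rfl
lemma pt_apply1 (x y : ℝ) : pt x y 1 = y := rfl

lemma norm_eq' (v : EuclideanSpace ℝ (Fin 2)) : ‖v‖ = Real.sqrt ((v 0)^2 + (v 1)^2) := by
  rw [EuclideanSpace.norm_eq, Fin.sum_univ_two]; simp

lemma norm_dir (k : Fin 6) : ‖dir k‖ = 1 := by
  rw [dir, norm_eq']
  rw [pt_apply0, pt_apply1, Real.cos_sq_add_sin_sq, Real.sqrt_one]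

lemma inner_dir (v : EuclideanSpace ℝ (Fin 2)) (k : Fin 6) :
    (inner ℝ v (dir k) : ℝ) = v 0 * Real.cos (k * Real.pi / 3) + v 1 * Real.sin (k * Real.pi / 3) := by
  rw [dir, inner_coords, pt_apply0, pt_apply1]

-- bridge
lemma inCone_iff (p q : EuclideanSpace ℝ (Fin 2)) (k : Fin 6) (hq : q ≠ p) :
    inCone p k q ↔ Real.sqrt 3 / 2 * ‖q - p‖ ≤ (inner ℝ (q - p) (dir k) : ℝ) := by
  have hu : q - p ≠ 0 := sub_ne_zero.mpr hq
  have hn : 0 < ‖q - p‖ := norm_pos_iff.mpr hu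
  rw [inCone, InnerProductGeometry.angle, norm_dir, mul_one]
  set t := (inner ℝ (q-p) (dir k) : ℝ) / ‖q - p‖ with ht
  have habs : |t| ≤ 1 := by
    have h := abs_real_inner_le_norm (q-p) (dir k)
    rw [norm_dir, mul_one] at h
    rw [ht, abs_div, abs_of_pos hn, div_le_one hn]
    exact h
  constructor
  · intro h
    have h1 : Real.cos (π/6) ≤ Real.cos (Real.arccos t) :=
      Real.cos_le_cos_of_nonneg_of_le_pi (Real.arccos_nonneg t)
        (by linarith [Real.pi_pos]) h
    rw [Real.cos_arccos (by linarith [abs_le.mp habs]) (by linarith [abs_le.mp habs]),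
      Real.cos_pi_div_six] at h1
    rw [ht] at h1
    calc Real.sqrt 3 / 2 * ‖q-p‖ ≤ (inner ℝ (q-p) (dir k) : ℝ) / ‖q-p‖ * ‖q-p‖ := by
          apply mul_le_mul_of_nonneg_right h1 hn.le
      _ = (inner ℝ (q-p) (dir k) : ℝ) := by field_simp
  · intro h
    have h1 : Real.sqrt 3 / 2 ≤ t := by
      rw [ht, le_div_iff₀ hn]; linarith
    calc Real.arccos t ≤ Real.arccos (Real.sqrt 3 / 2) := by
          rw [Real.arccos_eq_pi_div_two_sub_arcsin, Real.arccos_eq_pi_div_two_sub_arcsin]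
          exact sub_le_sub_left (Real.monotone_arcsin h1) _
      _ = π / 6 := by
          rw [← Real.cos_pi_div_six, Real.arccos_cos (by positivity) (by linarith [Real.pi_pos])]

-- coverage
lemma cover (v0 v1 : ℝ) (hv : v0 ≠ 0 ∨ v1 ≠ 0) : ∃ k : Fin 6,
    Real.sqrt 3 / 2 * Real.sqrt (v0^2+v1^2) ≤
      v0 * Real.cos ((k : ℕ) * Real.pi / 3) + v1 * Real.sin ((k : ℕ) * Real.pi / 3) := by
  set z : ℂ := ⟨v0, v1⟩ with hz
  have hz0 : z ≠ 0 := by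
    simp only [hz, Complex.ext_iff, Complex.zero_re, Complex.zero_im, ne_eq, not_and_or]
    exact hv
  have habs : ‖z‖ = Real.sqrt (v0^2+v1^2) := by
    rw [Complex.norm_def, Complex.normSq_apply, hz]
    norm_num [pow_two]
  set θ := Complex.arg z with hθ
  have hcosθ : Real.cos θ = v0 / ‖z‖ := Complex.cos_arg hz0
  have hsinθ : Real.sin θ = v1 / ‖z‖ := Complex.sin_arg z
  set m : ℤ := round (θ * 3 / π) with hm
  have hmod : 0 ≤ m % 6 ∧ m % 6 < 6 := ⟨Int.emod_nonneg m (by norm_num), Int.emod_lt_of_pos m (by norm_num)⟩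
  refine ⟨⟨(m % 6).toNat, by omega⟩, ?_⟩
  have hk : (((m % 6).toNat : ℕ) : ℝ) = (m : ℝ) - 6 * ((m / 6 : ℤ) : ℝ) := by
    have h1 : ((m % 6).toNat : ℤ) = m % 6 := Int.toNat_of_nonneg hmod.1
    have h2 : (m % 6 : ℤ) = m - 6 * (m / 6) := by rw [Int.emod_def]
    calc (((m % 6).toNat : ℕ) : ℝ) = ((m % 6 : ℤ) : ℝ) := by exact_mod_cast h1
      _ = (m : ℝ) - 6 * ((m / 6 : ℤ) : ℝ) := by rw [h2]; push_cast; ring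
  simp only [Fin.val_mk]
  rw [hk]
  have hcoseq : Real.cos (((m:ℝ) - 6*((m/6:ℤ):ℝ)) * π / 3) = Real.cos ((m:ℝ) * π / 3) := by
    have : ((m:ℝ) - 6*((m/6:ℤ):ℝ)) * π / 3 = (m:ℝ)*π/3 + (-(m/6:ℤ) : ℤ) * (2*π) := by
      push_cast; ring
    rw [this, Real.cos_add_int_mul_two_pi]
  have hsineq : Real.sin (((m:ℝ) - 6*((m/6:ℤ):ℝ)) * π / 3) = Real.sin ((m:ℝ) * π / 3) := by
    have : ((m:ℝ) - 6*((m/6:ℤ):ℝ)) * π / 3 = (m:ℝ)*π/3 + (-(m/6:ℤ) : ℤ) * (2*π) := by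
      push_cast; ring
    rw [this, Real.sin_add_int_mul_two_pi]
  rw [hcoseq, hsineq]
  -- now main estimate
  have hpi : (0:ℝ) < π := Real.pi_pos
  have hround : |θ * 3 / π - m| ≤ 1/2 := by
    rw [hm]; exact abs_sub_round _
  have hdiff : |θ - (m:ℝ)*π/3| ≤ π/6 := by
    have heq : θ - (m:ℝ)*π/3 = (θ*3/π - m) * (π/3) := by field_simp
    rw [heq, abs_mul, abs_of_pos (by positivity : (0:ℝ) < π/3)]
    calc |θ*3/π - m| * (π/3) ≤ (1/2) * (π/3) := by
          apply mul_le_mul_of_nonneg_right hround (by positivity)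
      _ = π/6 := by ring
  have hcos : Real.sqrt 3 / 2 ≤ Real.cos (θ - (m:ℝ)*π/3) := by
    rw [← Real.cos_abs, ← Real.cos_pi_div_six]
    exact Real.cos_le_cos_of_nonneg_of_le_pi (abs_nonneg _) (by linarith) hdiff
  have habs0 : 0 < ‖z‖ := norm_pos_iff.mpr hz0
  have hv0 : v0 = ‖z‖ * Real.cos θ := by
    rw [hcosθ]; field_simp
  have hv1 : v1 = ‖z‖ * Real.sin θ := by
    rw [hsinθ]; field_simp
  calc Real.sqrt 3 / 2 * Real.sqrt (v0^2+v1^2) = ‖z‖ * (Real.sqrt 3 / 2) := by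
        rw [← habs]; ring
    _ ≤ ‖z‖ * Real.cos (θ - (m:ℝ)*π/3) := by
        apply mul_le_mul_of_nonneg_left hcos habs0.le
    _ = v0 * Real.cos ((m:ℝ)*π/3) + v1 * Real.sin ((m:ℝ)*π/3) := by
        rw [Real.cos_sub, hv0, hv1]; ring

/-- Let `E` be the edge relation of the Yao-type graph `Υ₆(P,S)`: for each
`p ∈ P` and each of the six `π/3`-cones at `p` that contains a point of `S`, there is an
edge from `p` to a nearest point of `S` in that cone. Then for every `p ∈ P` and `s ∈ S`
there is an `s' ∈ S` with `E p s'` and `dist s s' ≤ dist p s`. -/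
theorem yao_neighbor_close
    (P S : Finset (EuclideanSpace ℝ (Fin 2))) (hdisj : Disjoint P S) (hS : S.Nonempty)
    (E : EuclideanSpace ℝ (Fin 2) → EuclideanSpace ℝ (Fin 2) → Prop)
    (hYao : ∀ p ∈ P, ∀ k : Fin 6, (∃ s ∈ S, inCone p k s) →
      ∃ s' ∈ S, inCone p k s' ∧ E p s' ∧ ∀ t ∈ S, inCone p k t → dist p s' ≤ dist p t) :
    ∀ p ∈ P, ∀ s ∈ S, ∃ s' ∈ S, E p s' ∧ dist s s' ≤ dist p s := by
  intro p hp s hs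
  have hsp : s ≠ p := by
    intro h; exact (Finset.disjoint_left.mp hdisj hp) (h ▸ hs)
  have hv : s - p ≠ 0 := sub_ne_zero.mpr hsp
  have hv' : (s - p) 0 ≠ 0 ∨ (s - p) 1 ≠ 0 := by
    by_contra h
    push_neg at h
    apply hv
    ext i
    fin_cases i
    · exact h.1
    · exact h.2
  obtain ⟨k, hk⟩ := cover ((s-p) 0) ((s-p) 1) hv'
  have hcone : inCone p k s := by
    rw [inCone_iff p s k hsp, norm_eq', inner_dir]
    exact hk
  obtain ⟨s', hs'S, hcone', hE, hmin⟩ := hYao p hp k ⟨s, hs, hcone⟩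
  refine ⟨s', hs'S, hE, ?_⟩
  have hs'p : s' ≠ p := by
    intro h; exact (Finset.disjoint_left.mp hdisj hp) (h ▸ hs'S)
  -- inner product bounds
  have hu := (inCone_iff p s k hsp).mp hcone
  have hw := (inCone_iff p s' k hs'p).mp hcone'
  rw [norm_eq', inner_dir] at hu hw
  have hkey := alg_key ((s-p) 0) ((s-p) 1) ((s'-p) 0) ((s'-p) 1)
    (Real.cos (k * Real.pi / 3)) (Real.sin (k * Real.pi / 3))
    (Real.cos_sq_add_sin_sq _) hu hw
  rw [← norm_eq', ← norm_eq', ← inner_coords] at hkey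
  -- norms
  have hwle : ‖s' - p‖ ≤ ‖s - p‖ := by
    have := hmin s hs hcone
    rw [dist_comm p s', dist_comm p s, dist_eq_norm, dist_eq_norm] at this
    exact this
  have hnormsq : ‖(s - p) - (s' - p)‖^2 ≤ ‖s - p‖^2 := by
    rw [norm_sub_sq_real]
    nlinarith [norm_nonneg (s - p), norm_nonneg (s' - p)]
  have hfinal : ‖(s - p) - (s' - p)‖ ≤ ‖s - p‖ := by
    nlinarith [norm_nonneg ((s - p) - (s' - p)), norm_nonneg (s - p)]
  rw [dist_eq_norm, dist_eq_norm]
  calc ‖s - s'‖ = ‖(s - p) - (s' - p)‖ := by rw [sub_sub_sub_cancel_right]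
    _ ≤ ‖s - p‖ := hfinal
    _ = ‖p - s‖ := by rw [norm_sub_rev]
end
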